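/- For every nonzero integer n, neither 0 nor ū is a root of the cubic P_n: P_n(0) ≠ 0 and P_n(ū) ≠ 0. (Equivalently, 0 and ū are never eigenvalues of the matrix R_n arising from the non-barotropic linearized system.) -/
import Mathlib


open Complex

/-- The characteristic cubic `P_n` of the matrix `R_n` arising from the non-barotropic
linearized compressible Navier–Stokes system. -/
noncomputable def Pcubic (lam kap u ρ θ R c : ℝ) (n : ℤ) (ν : ℂ) : ℂ :=
  ν ^ 3 - (((lam : ℂ) + (kap : ℂ)) * Complex.I * (n : ℂ) + 3 * (u : ℂ)) * ν ^ 2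
    - ((lam : ℂ) * (kap : ℂ) * (n : ℂ) ^ 2
        - 2 * ((lam : ℂ) + (kap : ℂ)) * (u : ℂ) * Complex.I * (n : ℂ)
        - 3 * (u : ℂ) ^ 2 + (R : ℂ) ^ 2 * (θ : ℂ) / (c : ℂ) + (R : ℂ) * (θ : ℂ)) * ν
    + (lam : ℂ) * (kap : ℂ) * (u : ℂ) * (n : ℂ) ^ 2
    - ((lam : ℂ) + (kap : ℂ)) * (u : ℂ) ^ 2 * Complex.I * (n : ℂ)
    - (u : ℂ) ^ 3 + (R : ℂ) ^ 2 * (θ : ℂ) / (c : ℂ) * (u : ℂ)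
    + (R : ℂ) * (θ : ℂ) * (kap : ℂ) * Complex.I * (n : ℂ) + (R : ℂ) * (θ : ℂ) * (u : ℂ)

/-- For every nonzero integer `n`, neither `0` nor `ū` is a root of the cubic `P_n`;
equivalently, `0` and `ū` are never eigenvalues of the matrix `R_n` of the
non-barotropic linearized system. -/
theorem zero_and_ubar_not_roots (lam kap u ρ θ R c : ℝ) (hlam : 0 < lam) (hkap : 0 < kap)
    (hu : 0 < u) (hρ : 0 < ρ) (hθ : 0 < θ) (hR : 0 < R) (hc : 0 < c)
    (n : ℤ) (hn : n ≠ 0) :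
    Pcubic lam kap u ρ θ R c n 0 ≠ 0 ∧ Pcubic lam kap u ρ θ R c n (u : ℂ) ≠ 0 := by
  have hnr : ((n : ℝ)) ≠ 0 := by exact_mod_cast hn
  have hn2 : (1 : ℝ) ≤ (n : ℝ) ^ 2 := by
    have h1 : (1 : ℤ) ≤ n ^ 2 := by
      rcases lt_or_gt_of_ne hn with h | h <;> nlinarith
    exact_mod_cast h1
  constructor
  · intro h
    have h2 : Pcubic lam kap u ρ θ R c n 0 =
        ((lam * kap * u * (n : ℝ) ^ 2 - u ^ 3 + R ^ 2 * θ / c * u + R * θ * u : ℝ) : ℂ)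
        + ((R * θ * kap * (n : ℝ) - (lam + kap) * u ^ 2 * (n : ℝ) : ℝ) : ℂ) * Complex.I := by
      simp only [Pcubic]
      push_cast
      ring
    rw [h2] at h
    rw [Complex.ext_iff] at h
    simp only [Complex.add_re, Complex.add_im, Complex.ofReal_re, Complex.ofReal_im,
      Complex.mul_re, Complex.mul_im, Complex.I_re, Complex.I_im, Complex.zero_re,
      Complex.zero_im, mul_zero, mul_one, zero_mul, sub_zero, zero_sub, zero_add,
      add_zero] at h
    obtain ⟨hre, him⟩ := h
    have him' : R * θ * kap = (lam + kap) * u ^ 2 := by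
      have h3 : (R * θ * kap) * (n : ℝ) = ((lam + kap) * u ^ 2) * (n : ℝ) := by linarith
      exact mul_right_cancel₀ hnr h3
    have hre' : u ^ 2 = lam * kap * (n : ℝ) ^ 2 + R ^ 2 * θ / c + R * θ := by
      have h3 : u * (u ^ 2) =
          u * (lam * kap * (n : ℝ) ^ 2 + R ^ 2 * θ / c + R * θ) := by linear_combination -hre
      exact (mul_left_cancel₀ hu.ne' h3)
    have hcd : (0 : ℝ) < R ^ 2 * θ / c := by positivity
    have key : R * θ * kap = (lam + kap) * (lam * kap * (n : ℝ) ^ 2 + R ^ 2 * θ / c + R * θ) := by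
      rw [← hre']; exact him'
    nlinarith [key, mul_pos (add_pos hlam hkap) hcd, mul_pos hlam (mul_pos hR hθ),
      mul_nonneg (mul_pos (add_pos hlam hkap) (mul_pos hlam hkap)).le (sq_nonneg ((n : ℝ)))]
  · have h2 : Pcubic lam kap u ρ θ R c n (u : ℂ) =
        ((R * θ * kap * (n : ℝ) : ℝ) : ℂ) * Complex.I := by
      simp only [Pcubic]
      push_cast
      ring
    rw [h2]
    apply mul_ne_zero _ Complex.I_ne_zero
    rw [Complex.ofReal_ne_zero]
    positivity
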